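/- Let n ≥ 1 and let A = (a_{ij}) be a real n×n matrix satisfying the cyclic non-increasing condition. Suppose the graph 𝒢(A) has exactly k fundamental closed SCCs C_1,…,C_k and exactly ℓ null closed SCCs C_{k+1},…,C_{k+ℓ}, and suppose that for each i = 1,…,k there is a fundamental solution x_i for C_i which is componentwise non-positive or componentwise non-negative. Let λ ∈ ℝ. Then a vector x ∈ ℝⁿ satisfies Aᵀx = λe if and only if x can be written as x = Σ_{i=1}^{k} α_i x_i + Σ_{i=1}^{ℓ} y_{k+i}, where α_1,…,α_k ∈ ℝ with Σ_{i=1}^{k} α_i = λ, and y_{k+i} is a null vector for C_{k+i} for each i = 1,…,ℓ. -/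

import Mathlib

open Matrix BigOperators

/-- The cyclic non-increasing condition: each row of `A` weakly decreases
cyclically starting from the diagonal, i.e. `a_{i[j-1]} ≥ a_{ij}` for all
`j ≠ i` (indices in `Fin n`, arithmetic mod `n`). -/
def CyclicNonIncr {n : ℕ} [NeZero n] (A : Matrix (Fin n) (Fin n) ℝ) : Prop :=
  ∀ i j : Fin n, j ≠ i → A i (j - 1) ≥ A i j

/-- The directed graph `𝒢(A)` has an edge from `i` to `j` iff `a_{i[j-1]} > a_{ij}`. -/
def GraphEdge {n : ℕ} [NeZero n] (A : Matrix (Fin n) (Fin n) ℝ) (i j : Fin n) : Prop :=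
  A i (j - 1) > A i j

/-- `i` and `j` are strongly connected in `𝒢(A)`: there are directed paths
(possibly of length 0) from `i` to `j` and from `j` to `i`. -/
def Conn {n : ℕ} [NeZero n] (A : Matrix (Fin n) (Fin n) ℝ) (i j : Fin n) : Prop :=
  Relation.ReflTransGen (GraphEdge A) i j ∧ Relation.ReflTransGen (GraphEdge A) j i

/-- `C` is a strongly connected component of `𝒢(A)`: an equivalence class of
the strong-connectivity relation. -/
def IsSCC {n : ℕ} [NeZero n] (A : Matrix (Fin n) (Fin n) ℝ) (C : Set (Fin n)) : Prop :=
  ∃ i, C = {j | Conn A i j}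

/-- `C` is a closed SCC of `𝒢(A)`: an SCC with no edge leaving it. -/
def IsClosedSCC {n : ℕ} [NeZero n] (A : Matrix (Fin n) (Fin n) ℝ) (C : Set (Fin n)) : Prop :=
  IsSCC A C ∧ ∀ i ∈ C, ∀ j, GraphEdge A i j → j ∈ C

/-- `C` is an open SCC of `𝒢(A)`: an SCC with some edge leaving it. -/
def IsOpenSCC {n : ℕ} [NeZero n] (A : Matrix (Fin n) (Fin n) ℝ) (C : Set (Fin n)) : Prop :=
  IsSCC A C ∧ ¬ (∀ i ∈ C, ∀ j, GraphEdge A i j → j ∈ C)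

/-- `x` is a fundamental solution for `C`: it is supported on `C` and solves
`[A]ᵀ_{CC} [x]_C = e_C`. -/
def IsFundSol {n : ℕ} [NeZero n] (A : Matrix (Fin n) (Fin n) ℝ) (C : Finset (Fin n))
    (x : Fin n → ℝ) : Prop :=
  (∀ i, i ∉ C → x i = 0) ∧ ∀ j ∈ C, ∑ i ∈ C, A i j * x i = 1

/-- `y` is a null vector for `C`: it is supported on `C` and
`[A]ᵀ_{CC} [y]_C = 0`. -/
def IsNullVec {n : ℕ} [NeZero n] (A : Matrix (Fin n) (Fin n) ℝ) (C : Finset (Fin n))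
    (y : Fin n → ℝ) : Prop :=
  (∀ i, i ∉ C → y i = 0) ∧ ∀ j ∈ C, ∑ i ∈ C, A i j * y i = 0

section Aux

variable {n : ℕ} [NeZero n] {A : Matrix (Fin n) (Fin n) ℝ}

open Fin.NatCast Fin.CommRing

lemma conn_refl (A : Matrix (Fin n) (Fin n) ℝ) (i : Fin n) : Conn A i i :=
  ⟨Relation.ReflTransGen.refl, Relation.ReflTransGen.refl⟩

lemma conn_symm {i j : Fin n} (h : Conn A i j) : Conn A j i := ⟨h.2, h.1⟩

lemma conn_trans {i j m : Fin n} (h : Conn A i j) (h' : Conn A j m) : Conn A i m :=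
  ⟨h.1.trans h'.1, h'.2.trans h.2⟩

lemma class_eq {b j : Fin n} (h : Conn A b j) :
    {k | Conn A j k} = {k | Conn A b k} := by
  ext kk
  exact ⟨fun hk => conn_trans h hk, fun hk => conn_trans (conn_symm h) hk⟩

lemma row_sum_zero (A : Matrix (Fin n) (Fin n) ℝ) (i : Fin n) :
    ∑ j, (A i (j - 1) - A i j) = 0 := by
  rw [Finset.sum_sub_distrib,
    Fintype.sum_equiv (Equiv.subRight (1 : Fin n)) (fun j => A i (j - 1)) (A i) (fun j => rfl)]
  ring

lemma d_nonneg (hA : CyclicNonIncr A) (j : Fin n) : 0 ≤ A j j - A j (j - 1) := by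
  have h := row_sum_zero A j
  rw [← Finset.add_sum_erase _ _ (Finset.mem_univ j)] at h
  have h2 : 0 ≤ ∑ i ∈ Finset.univ.erase j, (A j (i - 1) - A j i) :=
    Finset.sum_nonneg fun i hi => sub_nonneg.2 (hA j i (Finset.mem_erase.1 hi).1)
  linarith

lemma no_self_edge (hA : CyclicNonIncr A) (j : Fin n) : ¬ GraphEdge A j j := by
  have := d_nonneg hA j
  simp only [GraphEdge, gt_iff_lt, not_lt]
  linarith

lemma scc_base {C : Finset (Fin n)} (h : IsSCC A ↑C) :
    ∃ b, b ∈ C ∧ (↑C : Set (Fin n)) = {k | Conn A b k} := by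
  obtain ⟨b, hb⟩ := h
  refine ⟨b, ?_, hb⟩
  have : b ∈ (↑C : Set (Fin n)) := by rw [hb]; exact conn_refl A b
  exact Finset.mem_coe.1 this

lemma scc_ne_disjoint {C1 C2 : Finset (Fin n)} (h1 : IsSCC A ↑C1) (h2 : IsSCC A ↑C2)
    (hne : C1 ≠ C2) {j : Fin n} (hj1 : j ∈ C1) : j ∉ C2 := by
  obtain ⟨b1, hb1C, hb1⟩ := scc_base h1
  obtain ⟨b2, hb2C, hb2⟩ := scc_base h2
  intro hj2
  apply hne
  apply Finset.coe_injective
  rw [hb1, hb2]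
  have c1 : Conn A b1 j := by have := Finset.mem_coe.2 hj1; rwa [hb1] at this
  have c2 : Conn A b2 j := by have := Finset.mem_coe.2 hj2; rwa [hb2] at this
  rw [← class_eq c1, ← class_eq c2]

lemma class_of_mem {C : Finset (Fin n)} (h : IsSCC A ↑C) {j : Fin n} (hj : j ∈ C) :
    {k | Conn A j k} = (↑C : Set (Fin n)) := by
  obtain ⟨b, hbC, hb⟩ := scc_base h
  have cj : Conn A b j := by have := Finset.mem_coe.2 hj; rwa [hb] at this
  rw [hb]; exact class_eq cj

lemma term_eq_outside (hA : CyclicNonIncr A) {C : Finset (Fin n)}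
    (hclosed : ∀ i ∈ (↑C : Set (Fin n)), ∀ j, GraphEdge A i j → j ∈ (↑C : Set (Fin n)))
    {j : Fin n} (hj : j ∉ C) {i : Fin n} (hi : i ∈ C) : A i (j - 1) = A i j := by
  have hne : j ≠ i := fun h => hj (h ▸ hi)
  refine le_antisymm ?_ (hA i j hne)
  by_contra hlt
  push_neg at hlt
  exact hj (Finset.mem_coe.1 (hclosed i (Finset.mem_coe.2 hi) j hlt))

lemma diff_zero_all (hA : CyclicNonIncr A) {C : Finset (Fin n)} (hC : IsClosedSCC A ↑C)
    {v : Fin n → ℝ} (hloc : ∀ j ∈ C, ∑ i ∈ C, (A i (j - 1) - A i j) * v i = 0) (j : Fin n) :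
    ∑ i ∈ C, (A i (j - 1) - A i j) * v i = 0 := by
  by_cases hj : j ∈ C
  · exact hloc j hj
  · exact Finset.sum_eq_zero fun i hi => by rw [term_eq_outside hA hC.2 hj hi]; ring

lemma g_const_of_diff {g : Fin n → ℝ} (hdiff : ∀ j, g (j - 1) = g j) (j j' : Fin n) :
    g j = g j' := by
  have key : ∀ t : ℕ, ∀ b : Fin n, g (b + (t : Fin n)) = g b := by
    intro t
    induction t with
    | zero => intro b; simp
    | succ t ih =>
      intro b
      have e1 : b + ((t + 1 : ℕ) : Fin n) - 1 = b + (t : Fin n) := by push_cast; ring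
      rw [← hdiff (b + ((t + 1 : ℕ) : Fin n)), e1]
      exact ih b
  have e : j' = j + (((j' - j).val : ℕ) : Fin n) := by rw [Fin.cast_val_eq_self]; ring
  rw [e, key]

lemma g_const (hA : CyclicNonIncr A) {C : Finset (Fin n)} (hC : IsClosedSCC A ↑C)
    {v : Fin n → ℝ} (hloc : ∀ j ∈ C, ∑ i ∈ C, (A i (j - 1) - A i j) * v i = 0) (j j' : Fin n) :
    ∑ i ∈ C, A i j * v i = ∑ i ∈ C, A i j' * v i := by
  apply g_const_of_diff (g := fun jj => ∑ i ∈ C, A i jj * v i)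
  intro jj
  have h := diff_zero_all hA hC hloc jj
  simp only [sub_mul] at h
  rw [Finset.sum_sub_distrib] at h
  linarith

lemma g_anchored (hA : CyclicNonIncr A) {C : Finset (Fin n)} (hC : IsClosedSCC A ↑C)
    {v : Fin n → ℝ} {c : ℝ}
    (h : ∀ j ∈ C, ∑ i ∈ C, A i j * v i = c) (j : Fin n) :
    ∑ i ∈ C, A i j * v i = c := by
  obtain ⟨b, hbC, hb⟩ := scc_base hC.1
  have key : ∀ t : ℕ, ∑ i ∈ C, A i (b + (t : Fin n)) * v i = c := by
    intro t
    induction t with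
    | zero => simpa using h b hbC
    | succ t ih =>
      by_cases hj : b + ((t + 1 : ℕ) : Fin n) ∈ C
      · exact h _ hj
      · have e1 : b + ((t + 1 : ℕ) : Fin n) - 1 = b + (t : Fin n) := by push_cast; ring
        have e2 : ∑ i ∈ C, A i (b + ((t + 1 : ℕ) : Fin n)) * v i
            = ∑ i ∈ C, A i (b + ((t + 1 : ℕ) : Fin n) - 1) * v i :=
          Finset.sum_congr rfl fun i hi => by rw [(term_eq_outside hA hC.2 hj hi)]
        rw [e2, e1]
        exact ih
  have e : j = b + (((j - b).val : ℕ) : Fin n) := by rw [Fin.cast_val_eq_self]; ring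
  rw [e]; exact key _

end Aux

section Aux2

variable {n : ℕ} [NeZero n] {A : Matrix (Fin n) (Fin n) ℝ}

lemma zero_prop (hA : CyclicNonIncr A) {C : Finset (Fin n)} {b : Fin n}
    (hb : (↑C : Set (Fin n)) = {k | Conn A b k}) {v : Fin n → ℝ}
    (hv : ∀ i ∈ C, 0 ≤ v i)
    (hloc : ∀ j ∈ C, ∑ i ∈ C, (A i (j - 1) - A i j) * v i = 0)
    {i0 : Fin n} (hi0 : i0 ∈ C) (h0 : v i0 = 0) : ∀ i ∈ C, v i = 0 := by
  have memC : ∀ {i : Fin n}, i ∈ C ↔ Conn A b i := by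
    intro i
    constructor
    · intro h
      have : i ∈ (↑C : Set (Fin n)) := Finset.mem_coe.2 h
      rwa [hb] at this
    · intro h
      have : i ∈ (↑C : Set (Fin n)) := by rw [hb]; exact h
      exact Finset.mem_coe.1 this
  have pred : ∀ j ∈ C, v j = 0 → ∀ i ∈ C, GraphEdge A i j → v i = 0 := by
    intro j hj hvj i hi hedge
    have hnn : ∀ i' ∈ C, 0 ≤ (A i' (j - 1) - A i' j) * v i' := by
      intro i' hi'
      by_cases h : i' = j
      · subst h; rw [hvj, mul_zero]
      · exact mul_nonneg (sub_nonneg.2 (hA i' j (fun hh => h hh.symm))) (hv i' hi')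
    have hz := (Finset.sum_eq_zero_iff_of_nonneg hnn).1 (hloc j hj) i hi
    have hpos : 0 < A i (j - 1) - A i j := sub_pos.2 hedge
    exact (mul_eq_zero.1 hz).resolve_left (ne_of_gt hpos)
  have main : ∀ a, Relation.ReflTransGen (GraphEdge A) a i0 → a ∈ C → v a = 0 := by
    intro a ha
    induction ha using Relation.ReflTransGen.head_induction_on with
    | refl => exact fun _ => h0
    | head hedge hrest ih =>
      rename_i a' c'
      intro haC
      have hcC : c' ∈ C := by
        rw [memC]
        exact ⟨(memC.1 haC).1.tail hedge, hrest.trans (memC.1 hi0).2⟩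
      exact pred c' hcC (ih hcC) a' haC hedge
  intro i hi
  exact main i ((memC.1 hi).2.trans (memC.1 hi0).1) hi

lemma pos_on (hA : CyclicNonIncr A) {C : Finset (Fin n)} (hC : IsClosedSCC A ↑C)
    {w : Fin n → ℝ} {c : ℝ}
    (hw0 : ∀ i ∈ C, 0 ≤ w i)
    (hloc : ∀ j ∈ C, ∑ i ∈ C, (A i (j - 1) - A i j) * w i = 0)
    (hg : ∀ j ∈ C, ∑ i ∈ C, A i j * w i = c) (hc : c ≠ 0) :
    ∀ i ∈ C, 0 < w i := by
  obtain ⟨b, hbC, hb⟩ := scc_base hC.1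
  intro i hi
  rcases lt_or_eq_of_le (hw0 i hi) with h | h
  · exact h
  · exfalso
    have hall := zero_prop hA hb hw0 hloc hi h.symm
    have hgb := hg b hbC
    rw [Finset.sum_eq_zero (fun i' hi' => by rw [hall i' hi', mul_zero])] at hgb
    exact hc hgb.symm

lemma unique_on (hA : CyclicNonIncr A) {C : Finset (Fin n)} (hC : IsClosedSCC A ↑C)
    {w z : Fin n → ℝ}
    (hwpos : ∀ i ∈ C, 0 < w i)
    (hlw : ∀ j ∈ C, ∑ i ∈ C, (A i (j - 1) - A i j) * w i = 0)
    (hlz : ∀ j ∈ C, ∑ i ∈ C, (A i (j - 1) - A i j) * z i = 0) :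
    ∃ t : ℝ, ∀ i ∈ C, z i = t * w i := by
  obtain ⟨b, hbC, hb⟩ := scc_base hC.1
  obtain ⟨im, him, hmax⟩ := Finset.exists_max_image C (fun i => z i / w i) ⟨b, hbC⟩
  set t := z im / w im with ht
  refine ⟨t, ?_⟩
  set v : Fin n → ℝ := fun i => t * w i - z i with hv
  have hv0 : ∀ i ∈ C, 0 ≤ v i := by
    intro i hi
    have h1 : z i / w i ≤ t := hmax i hi
    have h2 : 0 < w i := hwpos i hi
    have h3 : z i ≤ t * w i := by
      have := (div_le_iff₀ h2).1 h1
      linarith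
    simp only [hv]
    linarith
  have hlv : ∀ j ∈ C, ∑ i ∈ C, (A i (j - 1) - A i j) * v i = 0 := by
    intro j hj
    have e : ∀ i : Fin n, (A i (j - 1) - A i j) * v i
        = t * ((A i (j - 1) - A i j) * w i) - (A i (j - 1) - A i j) * z i := by
      intro i; simp only [hv]; ring
    rw [Finset.sum_congr rfl (fun i _ => e i), Finset.sum_sub_distrib, ← Finset.mul_sum,
      hlw j hj, hlz j hj]
    ring
  have hvim : v im = 0 := by
    have h3 : z im / w im * w im = z im := div_mul_cancel₀ _ (ne_of_gt (hwpos im him))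
    simp only [hv, ht]
    linarith
  have hall := zero_prop hA hb hv0 hlv him hvim
  intro i hi
  have h4 := hall i hi
  simp only [hv] at h4
  linarith

end Aux2
section Aux3

variable {n : ℕ} [NeZero n] {A : Matrix (Fin n) (Fin n) ℝ}

lemma transient_zero (hA : CyclicNonIncr A) (x : Fin n → ℝ)
    (hdiff : ∀ j, ∑ i, (A i (j - 1) - A i j) * x i = 0)
    {j : Fin n} (hj : ¬ IsClosedSCC A {kk | Conn A j kk}) : x j = 0 := by
  classical
  by_contra hxj
  set u : Fin n → ℝ := fun i => |x i| with hu
  have hu0 : ∀ i, 0 ≤ u i := fun i => abs_nonneg _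
  have hudiff : ∀ jj, ∑ i, (A i (jj - 1) - A i jj) * u i = 0 := by
    have hFnn : ∀ jj, 0 ≤ ∑ i, (A i (jj - 1) - A i jj) * u i := by
      intro jj
      have e2 : (A jj jj - A jj (jj - 1)) * x jj
          = ∑ i ∈ Finset.univ.erase jj, (A i (jj - 1) - A i jj) * x i := by
        have h := hdiff jj
        rw [← Finset.add_sum_erase _ _ (Finset.mem_univ jj)] at h
        linarith
      have e3 : (A jj jj - A jj (jj - 1)) * u jj
          ≤ ∑ i ∈ Finset.univ.erase jj, (A i (jj - 1) - A i jj) * u i := by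
        have habs : (A jj jj - A jj (jj - 1)) * u jj = |(A jj jj - A jj (jj - 1)) * x jj| := by
          simp only [hu]
          rw [abs_mul, abs_of_nonneg (d_nonneg hA jj)]
        rw [habs, e2]
        refine (Finset.abs_sum_le_sum_abs _ _).trans ?_
        refine Finset.sum_le_sum fun i hi => ?_
        rw [abs_mul, abs_of_nonneg (sub_nonneg.2 (hA i jj (Finset.mem_erase.1 hi).1.symm))]
      have efull : ∑ i, (A i (jj - 1) - A i jj) * u i
          = (∑ i ∈ Finset.univ.erase jj, (A i (jj - 1) - A i jj) * u i)
            - (A jj jj - A jj (jj - 1)) * u jj := by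
        rw [← Finset.add_sum_erase _ _ (Finset.mem_univ jj)]
        ring
      rw [efull]
      linarith
    have hFsum : ∑ jj, ∑ i, (A i (jj - 1) - A i jj) * u i = 0 := by
      rw [Finset.sum_comm]
      refine Finset.sum_eq_zero fun i _ => ?_
      rw [← Finset.sum_mul, row_sum_zero, zero_mul]
    intro jj
    exact (Finset.sum_eq_zero_iff_of_nonneg (fun j' _ => hFnn j')).1 hFsum jj (Finset.mem_univ jj)
  let V : Finset (Fin n) :=
    Finset.univ.filter (fun i => ¬ IsClosedSCC A {kk | Conn A i kk} ∧ 0 < u i)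
  have hjV : j ∈ V := by
    refine Finset.mem_filter.2 ⟨Finset.mem_univ _, hj, ?_⟩
    simpa [hu] using abs_pos.2 hxj
  obtain ⟨j0, hj0V, hj0min⟩ := V.exists_min_image
    (fun i => (V.filter (fun kk => Relation.ReflTransGen (GraphEdge A) kk i)).card) ⟨j, hjV⟩
  have hj0tr : ¬ IsClosedSCC A {kk | Conn A j0 kk} := (Finset.mem_filter.1 hj0V).2.1
  have hj0pos : 0 < u j0 := (Finset.mem_filter.1 hj0V).2.2
  have hmin : ∀ i ∈ V, Relation.ReflTransGen (GraphEdge A) i j0 →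
      Relation.ReflTransGen (GraphEdge A) j0 i := by
    intro i hiV hreach
    by_contra hnr
    have hsub : V.filter (fun kk => Relation.ReflTransGen (GraphEdge A) kk i)
        ⊆ V.filter (fun kk => Relation.ReflTransGen (GraphEdge A) kk j0) := by
      intro kk hkk
      have h' := Finset.mem_filter.1 hkk
      exact Finset.mem_filter.2 ⟨h'.1, h'.2.trans hreach⟩
    have hmem1 : j0 ∈ V.filter (fun kk => Relation.ReflTransGen (GraphEdge A) kk j0) :=
      Finset.mem_filter.2 ⟨hj0V, Relation.ReflTransGen.refl⟩
    have hmem2 : j0 ∉ V.filter (fun kk => Relation.ReflTransGen (GraphEdge A) kk i) :=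
      fun h => hnr (Finset.mem_filter.1 h).2
    have hlt := Finset.card_lt_card ((Finset.ssubset_iff_of_subset hsub).2 ⟨j0, hmem1, hmem2⟩)
    exact absurd (hj0min i hiV) (not_le.2 hlt)
  let C0 : Finset (Fin n) := Finset.univ.filter (fun kk => Conn A j0 kk)
  have hC0coe : (↑C0 : Set (Fin n)) = {kk | Conn A j0 kk} := by
    ext kk; simp [C0]
  have hj0C0 : j0 ∈ C0 := Finset.mem_filter.2 ⟨Finset.mem_univ _, conn_refl A j0⟩
  have hnc : ¬ (∀ i ∈ (↑C0 : Set (Fin n)), ∀ jj, GraphEdge A i jj →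
      jj ∈ (↑C0 : Set (Fin n))) := by
    intro h
    refine hj0tr ⟨⟨j0, rfl⟩, ?_⟩
    rw [← hC0coe]
    exact h
  push_neg at hnc
  obtain ⟨i0, hi0mem, j1, hedge1, hj1mem⟩ := hnc
  have hi0C0 : i0 ∈ C0 := Finset.mem_coe.1 hi0mem
  have hj1C0 : j1 ∉ C0 := fun h => hj1mem (Finset.mem_coe.2 h)
  have hloc : ∀ jj ∈ C0, ∑ i ∈ C0, (A i (jj - 1) - A i jj) * u i = 0 := by
    intro jj hjj
    refine (Finset.sum_subset (Finset.subset_univ C0) ?_).trans (hudiff jj)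
    intro i _ hiC0
    by_cases hui : u i = 0
    · rw [hui, mul_zero]
    have hupos : 0 < u i := lt_of_le_of_ne (hu0 i) (Ne.symm hui)
    have hjne : jj ≠ i := fun h => hiC0 (h ▸ hjj)
    by_cases hD : A i (jj - 1) = A i jj
    · rw [hD]; ring
    have hedge : GraphEdge A i jj := lt_of_le_of_ne (hA i jj hjne) (fun h => hD h.symm)
    have hconnjj : Conn A j0 jj := (Finset.mem_filter.1 hjj).2
    exfalso
    by_cases hicl : IsClosedSCC A {kk | Conn A i kk}
    · have hjj' : jj ∈ {kk | Conn A i kk} := hicl.2 i (conn_refl A i) jj hedge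
      exact hiC0 (Finset.mem_filter.2 ⟨Finset.mem_univ _, conn_trans hconnjj (conn_symm hjj')⟩)
    · have hiV : i ∈ V := Finset.mem_filter.2 ⟨Finset.mem_univ _, hicl, hupos⟩
      have hreach : Relation.ReflTransGen (GraphEdge A) i j0 :=
        Relation.ReflTransGen.head hedge hconnjj.2
      exact hiC0 (Finset.mem_filter.2 ⟨Finset.mem_univ _, hmin i hiV hreach, hreach⟩)
  have hsumC : ∑ i ∈ C0, (∑ jj ∈ C0, (A i (jj - 1) - A i jj)) * u i = 0 := by
    have h1 : ∑ jj ∈ C0, ∑ i ∈ C0, (A i (jj - 1) - A i jj) * u i = 0 :=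
      Finset.sum_eq_zero hloc
    rw [Finset.sum_comm] at h1
    rw [← h1]
    exact Finset.sum_congr rfl fun i _ => by rw [Finset.sum_mul]
  have hterm_np : ∀ i ∈ C0, (∑ jj ∈ C0, (A i (jj - 1) - A i jj)) * u i ≤ 0 := by
    intro i hi
    have hσ : ∑ jj ∈ C0, (A i (jj - 1) - A i jj) ≤ 0 := by
      have hr := row_sum_zero A i
      rw [← Finset.sum_sdiff (Finset.subset_univ C0)] at hr
      have h2 : 0 ≤ ∑ jj ∈ Finset.univ \ C0, (A i (jj - 1) - A i jj) := by
        refine Finset.sum_nonneg fun jj hjj => ?_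
        have hne : jj ≠ i := fun h => (Finset.mem_sdiff.1 hjj).2 (h ▸ hi)
        exact sub_nonneg.2 (hA i jj hne)
      linarith
    calc (∑ jj ∈ C0, (A i (jj - 1) - A i jj)) * u i
        ≤ 0 * u i := mul_le_mul_of_nonneg_right hσ (hu0 i)
      _ = 0 := zero_mul _
  have hi0zero : u i0 = 0 := by
    have h := (Finset.sum_eq_zero_iff_of_nonpos hterm_np).1 hsumC i0 hi0C0
    have hσneg : ∑ jj ∈ C0, (A i0 (jj - 1) - A i0 jj) < 0 := by
      have hr := row_sum_zero A i0
      rw [← Finset.sum_sdiff (Finset.subset_univ C0)] at hr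
      have hb : A i0 (j1 - 1) - A i0 j1
          ≤ ∑ jj ∈ Finset.univ \ C0, (A i0 (jj - 1) - A i0 jj) := by
        refine Finset.single_le_sum (f := fun jj => A i0 (jj - 1) - A i0 jj) (fun jj hjj => ?_)
          (Finset.mem_sdiff.2 ⟨Finset.mem_univ _, hj1C0⟩)
        have hne : jj ≠ i0 := fun h => (Finset.mem_sdiff.1 hjj).2 (h ▸ hi0C0)
        exact sub_nonneg.2 (hA i0 jj hne)
      have hp : 0 < A i0 (j1 - 1) - A i0 j1 := sub_pos.2 hedge1
      linarith
    rcases mul_eq_zero.1 h with h' | h'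
    · exact absurd h' (ne_of_lt hσneg)
    · exact h'
  have hz := zero_prop hA hC0coe (fun i _ => hu0 i) hloc hi0C0 hi0zero j0 hj0C0
  rw [hz] at hj0pos
  exact lt_irrefl 0 hj0pos

end Aux3

theorem stmt_4 (n : ℕ) [NeZero n] (hn : 1 ≤ n) (A : Matrix (Fin n) (Fin n) ℝ)
    (hA : CyclicNonIncr A) (k l : ℕ)
    (Cf : Fin k → Finset (Fin n)) (Cn : Fin l → Finset (Fin n))
    (hCfinj : Function.Injective Cf) (hCninj : Function.Injective Cn)
    (hCfSCC : ∀ i, IsClosedSCC A (↑(Cf i) : Set (Fin n)))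
    (hCnSCC : ∀ i, IsClosedSCC A (↑(Cn i) : Set (Fin n)))
    (hCfFund : ∀ i, ∃ y, IsFundSol A (Cf i) y)
    (hCnNull : ∀ i, ¬ ∃ y, IsFundSol A (Cn i) y)
    (hall : ∀ C : Finset (Fin n), IsClosedSCC A (↑C : Set (Fin n)) →
      (∃ i, C = Cf i) ∨ (∃ i, C = Cn i))
    (xf : Fin k → Fin n → ℝ)
    (hxf : ∀ i, IsFundSol A (Cf i) (xf i))
    (hsign : ∀ i, (∀ j, xf i j ≤ 0) ∨ (∀ j, 0 ≤ xf i j))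
    (lam : ℝ) (x : Fin n → ℝ) :
    Aᵀ.mulVec x = (fun _ => lam) ↔
      ∃ (α : Fin k → ℝ) (y : Fin l → Fin n → ℝ),
        (∑ i, α i = lam) ∧ (∀ i, IsNullVec A (Cn i) (y i)) ∧
        x = (∑ i, α i • xf i) + ∑ i, y i := by
  classical
  have hfund_global : ∀ fi : Fin k, ∀ jj, ∑ i ∈ Cf fi, A i jj * xf fi i = 1 :=
    fun fi => g_anchored hA (hCfSCC fi) (hxf fi).2
  have hmv : ∀ z : Fin n → ℝ, ∀ jj, (Aᵀ.mulVec z) jj = ∑ i, A i jj * z i := by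
    intro z jj
    simp [Matrix.mulVec, dotProduct, Matrix.transpose_apply]
  have hcol : ∀ (α : Fin k → ℝ) (y : Fin l → Fin n → ℝ), (∀ i, IsNullVec A (Cn i) (y i)) →
      ∀ jj, ∑ i, A i jj * (((∑ fi, α fi • xf fi) + ∑ ni, y ni) i) = ∑ fi, α fi := by
    intro α y hy jj
    have expand : ∀ i, ((∑ fi, α fi • xf fi) + ∑ ni, y ni) i
        = (∑ fi, α fi * xf fi i) + ∑ ni, y ni i := by
      intro i
      simp [Finset.sum_apply, Pi.add_apply, Pi.smul_apply, smul_eq_mul]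
    have key1 : ∀ fi, ∑ i, A i jj * xf fi i = 1 := by
      intro fi
      rw [← Finset.sum_subset (Finset.subset_univ (Cf fi))
        (fun i _ hi => by rw [(hxf fi).1 i hi, mul_zero])]
      exact hfund_global fi jj
    have key2 : ∀ ni, ∑ i, A i jj * y ni i = 0 := by
      intro ni
      rw [← Finset.sum_subset (Finset.subset_univ (Cn ni))
        (fun i _ hi => by rw [(hy ni).1 i hi, mul_zero])]
      exact g_anchored hA (hCnSCC ni) (hy ni).2 jj
    have split : ∑ i, A i jj * (((∑ fi, α fi • xf fi) + ∑ ni, y ni) i)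
        = (∑ i, ∑ fi, α fi * (A i jj * xf fi i)) + ∑ i, ∑ ni, A i jj * y ni i := by
      rw [← Finset.sum_add_distrib]
      refine Finset.sum_congr rfl fun i _ => ?_
      rw [expand i, mul_add, Finset.mul_sum, Finset.mul_sum]
      congr 1
      exact Finset.sum_congr rfl fun fi _ => by ring
    have c1 : ∑ i, ∑ fi, α fi * (A i jj * xf fi i) = ∑ fi, α fi := by
      rw [Finset.sum_comm]
      refine Finset.sum_congr rfl fun fi _ => ?_
      rw [← Finset.mul_sum, key1 fi, mul_one]
    have c2 : (∑ i : Fin n, ∑ ni, A i jj * y ni i) = 0 := by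
      rw [Finset.sum_comm]
      exact Finset.sum_eq_zero fun ni _ => key2 ni
    rw [split, c1, c2, add_zero]
  constructor
  · -- forward direction
    intro hx
    have hxcol : ∀ jj, ∑ i, A i jj * x i = lam := by
      intro jj
      have := congrFun hx jj
      rw [hmv x jj] at this
      exact this
    have hdiff : ∀ jj, ∑ i, (A i (jj - 1) - A i jj) * x i = 0 := by
      intro jj
      have h1 := hxcol (jj - 1)
      have h2 := hxcol jj
      simp only [sub_mul]
      rw [Finset.sum_sub_distrib, h1, h2, sub_self]
    have htr : ∀ i, ¬ IsClosedSCC A {kk | Conn A i kk} → x i = 0 :=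
      fun i hi => transient_zero hA x hdiff hi
    have hlocx : ∀ C : Finset (Fin n), IsClosedSCC A ↑C →
        ∀ jj ∈ C, ∑ i ∈ C, (A i (jj - 1) - A i jj) * x i = 0 := by
      intro C hC jj hjj
      refine (Finset.sum_subset (Finset.subset_univ C) ?_).trans (hdiff jj)
      intro i _ hiC
      by_cases hxi : x i = 0
      · rw [hxi, mul_zero]
      by_cases hicl : IsClosedSCC A {kk | Conn A i kk}
      · have hjne : jj ≠ i := fun h => hiC (h ▸ hjj)
        by_cases hD : A i (jj - 1) = A i jj
        · rw [hD]; ring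
        have hedge : GraphEdge A i jj := lt_of_le_of_ne (hA i jj hjne) (fun h => hD h.symm)
        have hjj' : jj ∈ {kk | Conn A i kk} := hicl.2 i (conn_refl A i) jj hedge
        exfalso
        have hclass : {kk | Conn A jj kk} = (↑C : Set (Fin n)) := class_of_mem hC.1 hjj
        have : i ∈ {kk | Conn A jj kk} := conn_symm hjj'
        rw [hclass] at this
        exact hiC (Finset.mem_coe.1 this)
      · rw [htr i hicl, mul_zero]
    have hfcoef : ∀ fi : Fin k, ∃ t : ℝ, ∀ i ∈ Cf fi, x i = t * xf fi i := by
      intro fi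
      have hlz := hlocx (Cf fi) (hCfSCC fi)
      have hlw : ∀ jj ∈ Cf fi, ∑ i ∈ Cf fi, (A i (jj - 1) - A i jj) * xf fi i = 0 := by
        intro jj hjj
        simp only [sub_mul]
        rw [Finset.sum_sub_distrib, hfund_global fi (jj - 1), hfund_global fi jj, sub_self]
      rcases hsign fi with hneg | hpos
      · have hlw' : ∀ jj ∈ Cf fi, ∑ i ∈ Cf fi, (A i (jj - 1) - A i jj) * (-xf fi i) = 0 := by
          intro jj hjj
          simp only [mul_neg]
          rw [Finset.sum_neg_distrib, hlw jj hjj, neg_zero]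
        have hg' : ∀ jj ∈ Cf fi, ∑ i ∈ Cf fi, A i jj * (-xf fi i) = (-1 : ℝ) := by
          intro jj hjj
          simp only [mul_neg]
          rw [Finset.sum_neg_distrib, (hxf fi).2 jj hjj]
        have hwpos : ∀ i ∈ Cf fi, 0 < -xf fi i :=
          pos_on hA (hCfSCC fi) (fun i _ => by linarith [hneg i]) hlw' hg' (by norm_num)
        obtain ⟨t, ht⟩ := unique_on hA (hCfSCC fi) hwpos hlw' hlz
        exact ⟨-t, fun i hi => by have := ht i hi; linarith⟩
      · have hg' : ∀ jj ∈ Cf fi, ∑ i ∈ Cf fi, A i jj * xf fi i = (1 : ℝ) := (hxf fi).2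
        have hwpos : ∀ i ∈ Cf fi, 0 < xf fi i :=
          pos_on hA (hCfSCC fi) (fun i _ => hpos i) hlw hg' (by norm_num)
        exact unique_on hA (hCfSCC fi) hwpos hlw hlz
    choose α hα using hfcoef
    set y : Fin l → Fin n → ℝ := fun ni jj => if jj ∈ Cn ni then x jj else 0 with hy
    have hynull : ∀ ni, IsNullVec A (Cn ni) (y ni) := by
      intro ni
      constructor
      · intro i hi
        simp [hy, hi]
      · intro jj hjj
        have e : ∑ i ∈ Cn ni, A i jj * y ni i = ∑ i ∈ Cn ni, A i jj * x i :=
          Finset.sum_congr rfl fun i hi => by simp [hy, hi]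
        rw [e]
        by_contra hc0
        apply hCnNull ni
        set c := ∑ i ∈ Cn ni, A i jj * x i with hc
        have hgc : ∀ j' ∈ Cn ni, ∑ i ∈ Cn ni, A i j' * x i = c :=
          fun j' _ => g_const hA (hCnSCC ni) (hlocx _ (hCnSCC ni)) j' jj
        refine ⟨fun i => if i ∈ Cn ni then x i / c else 0, fun i hi => by simp [hi], ?_⟩
        intro j' hj'
        have e2 : ∑ i ∈ Cn ni, A i j' * (if i ∈ Cn ni then x i / c else 0)
            = (∑ i ∈ Cn ni, A i j' * x i) / c := by
          rw [Finset.sum_div]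
          refine Finset.sum_congr rfl fun i hi => ?_
          rw [if_pos hi]
          ring
        rw [e2, hgc j' hj', div_self hc0]
    have hdec : x = (∑ fi, α fi • xf fi) + ∑ ni, y ni := by
      funext j
      have expand : ((∑ fi, α fi • xf fi) + ∑ ni, y ni) j
          = (∑ fi, α fi * xf fi j) + ∑ ni, y ni j := by
        simp [Finset.sum_apply, Pi.add_apply, Pi.smul_apply, smul_eq_mul]
      rw [expand]
      by_cases h1 : ∃ fi, j ∈ Cf fi
      · obtain ⟨fi, hfi⟩ := h1
        have hothers : ∀ fi' ∈ Finset.univ, fi' ≠ fi → α fi' * xf fi' j = 0 := by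
          intro fi' _ hne
          have hnot : j ∉ Cf fi' :=
            scc_ne_disjoint (hCfSCC fi).1 (hCfSCC fi').1
              (fun h => hne (hCfinj h).symm) hfi
          rw [(hxf fi').1 j hnot, mul_zero]
        have hyj : ∀ ni, y ni j = 0 := by
          intro ni
          have hCne : Cf fi ≠ Cn ni := by
            intro h
            exact hCnNull ni (h ▸ hCfFund fi)
          have hnot : j ∉ Cn ni := scc_ne_disjoint (hCfSCC fi).1 (hCnSCC ni).1 hCne hfi
          simp [hy, hnot]
        rw [Finset.sum_eq_single fi hothers (fun h => absurd (Finset.mem_univ fi) h),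
          Finset.sum_eq_zero (fun ni _ => hyj ni), add_zero]
        exact hα fi j hfi
      · by_cases h2 : ∃ ni, j ∈ Cn ni
        · obtain ⟨ni, hni⟩ := h2
          have hfj : ∀ fi, α fi * xf fi j = 0 := by
            intro fi
            have hCne : Cn ni ≠ Cf fi := by
              intro h
              exact hCnNull ni (h ▸ hCfFund fi)
            have hnot : j ∉ Cf fi := scc_ne_disjoint (hCnSCC ni).1 (hCfSCC fi).1 hCne hni
            rw [(hxf fi).1 j hnot, mul_zero]
          have hyj : ∀ ni' ∈ Finset.univ, ni' ≠ ni → y ni' j = 0 := by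
            intro ni' _ hne
            have hCne : Cn ni ≠ Cn ni' := fun h => hne (hCninj h).symm
            have hnot : j ∉ Cn ni' := scc_ne_disjoint (hCnSCC ni).1 (hCnSCC ni').1 hCne hni
            simp [hy, hnot]
          rw [Finset.sum_eq_zero (fun fi _ => hfj fi),
            Finset.sum_eq_single ni hyj (fun h => absurd (Finset.mem_univ ni) h), zero_add]
          simp [hy, hni]
        · push_neg at h1 h2
          have hjtr : ¬ IsClosedSCC A {kk | Conn A j kk} := by
            intro hcl
            set Cj : Finset (Fin n) := Finset.univ.filter (fun kk => Conn A j kk) with hCj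
            have hcoe : (↑Cj : Set (Fin n)) = {kk | Conn A j kk} := by
              ext kk; simp [hCj]
            have hclosed : IsClosedSCC A ↑Cj := by rw [hcoe]; exact hcl
            have hjmem : j ∈ Cj := Finset.mem_filter.2 ⟨Finset.mem_univ _, conn_refl A j⟩
            rcases hall Cj hclosed with ⟨fi, hfi⟩ | ⟨ni, hni⟩
            · exact h1 fi (hfi ▸ hjmem)
            · exact h2 ni (hni ▸ hjmem)
          have hf0 : ∀ fi, α fi * xf fi j = 0 := fun fi => by
            rw [(hxf fi).1 j (h1 fi), mul_zero]
          have hy0 : ∀ ni, y ni j = 0 := fun ni => by simp [hy, h2 ni]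
          rw [Finset.sum_eq_zero (fun fi _ => hf0 fi),
            Finset.sum_eq_zero (fun ni _ => hy0 ni), htr j hjtr, add_zero]
    have hsum : ∑ fi, α fi = lam := by
      have h0 := hxcol 0
      rw [hdec, hcol α y hynull 0] at h0
      exact h0
    exact ⟨α, y, hsum, hynull, hdec⟩
  · rintro ⟨α, y, hsum, hy, hdec⟩
    funext jj
    rw [hmv x jj, hdec, hcol α y hy jj, hsum]
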